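/- Let g and g' be compact Lie algebras (finite-dimensional real Lie algebras admitting an invariant inner product), and let f : g → g' be a surjective Lie algebra homomorphism. If t is a maximal abelian Lie subalgebra of g, then f(t) is a maximal abelian Lie subalgebra of g'. -/

import Mathlib

/-- A finite-dimensional real Lie algebra is *compact* if it admits an ad-invariant
positive definite (symmetric) inner product. -/
def IsCompactLieAlgebra (g : Type*) [LieRing g] [LieAlgebra ℝ g] : Prop :=
  ∃ B : g →ₗ[ℝ] g →ₗ[ℝ] ℝ,
    (∀ x y : g, B x y = B y x) ∧
    (∀ x : g, x ≠ 0 → 0 < B x x) ∧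
    (∀ x y z : g, B ⁅x, y⁆ z + B y ⁅x, z⁆ = 0)

/-- A Lie subalgebra `t` of `g` is *maximal abelian* if it is abelian and is not properly
contained in any abelian Lie subalgebra of `g`. -/
def IsMaximalAbelianLieSubalgebra {g : Type*} [LieRing g] [LieAlgebra ℝ g]
    (t : LieSubalgebra ℝ g) : Prop :=
  IsLieAbelian t ∧ ∀ t' : LieSubalgebra ℝ g, IsLieAbelian t' → t ≤ t' → t' = t

/-- Let `g` and `g'` be compact Lie algebras (finite-dimensional real Lie
algebras admitting an invariant inner product) and let `f : g → g'` be a surjective Lie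
algebra homomorphism.  If `t` is a maximal abelian Lie subalgebra of `g`, then `f(t)` is a
maximal abelian Lie subalgebra of `g'`. -/
theorem image_of_maximal_abelian_is_maximal_abelian
    {g g' : Type*} [LieRing g] [LieAlgebra ℝ g] [FiniteDimensional ℝ g]
    [LieRing g'] [LieAlgebra ℝ g'] [FiniteDimensional ℝ g']
    (hg : IsCompactLieAlgebra g) (hg' : IsCompactLieAlgebra g')
    (f : g →ₗ⁅ℝ⁆ g') (hf : Function.Surjective f)
    (t : LieSubalgebra ℝ g) (ht : IsMaximalAbelianLieSubalgebra t) :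
    IsMaximalAbelianLieSubalgebra (t.map f) := by
  obtain ⟨B, hsymm, hpos, hinv⟩ := hg
  obtain ⟨htab, htmax⟩ := ht
  -- definiteness
  have hdef : ∀ x : g, B x x = 0 → x = 0 := by
    intro x hx
    by_contra h
    exact (hpos x h).ne' hx
  have hrefl : B.IsRefl := fun x y h => by rw [hsymm]; exact h
  -- the kernel as a submodule
  set K : Submodule ℝ g := LinearMap.ker (f : g →ₗ[ℝ] g') with hK
  have hKmem : ∀ x : g, x ∈ K ↔ f x = 0 := fun x => Iff.rfl
  have hKideal : ∀ (z : g), ∀ a ∈ K, ⁅z, a⁆ ∈ K := by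
    intro z a ha
    rw [hKmem] at ha ⊢
    rw [LieHom.map_lie, ha, lie_zero]
  set M : Submodule ℝ g := LinearMap.BilinForm.orthogonal B K with hM
  have hMmem : ∀ y : g, y ∈ M ↔ ∀ a ∈ K, B a y = 0 := by
    intro y; exact LinearMap.BilinForm.mem_orthogonal_iff
  -- the decomposition g = K ⊕ M
  have hres : (LinearMap.BilinForm.restrict B K).Nondegenerate := by
    constructor <;>
    · intro x hx
      have := hx x
      simp only [LinearMap.BilinForm.restrict_apply] at this
      exact Subtype.ext (hdef _ this)
  have hcompl : IsCompl K M :=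
    LinearMap.BilinForm.isCompl_orthogonal_of_restrict_nondegenerate hrefl hres
  have hsup : ∀ x : g, ∃ a ∈ K, ∃ b ∈ M, x = a + b := by
    intro x
    have hx : x ∈ K ⊔ M := by rw [hcompl.sup_eq_top]; trivial
    obtain ⟨a, ha, b, hb, hab⟩ := Submodule.mem_sup.mp hx
    exact ⟨a, ha, b, hb, hab.symm⟩
  have hinf : ∀ x : g, x ∈ K → x ∈ M → x = 0 := by
    intro x hxK hxM
    have : x ∈ K ⊓ M := ⟨hxK, hxM⟩
    rwa [hcompl.inf_eq_bot, Submodule.mem_bot] at this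
  -- M is an ideal
  have hMideal : ∀ (z : g), ∀ y ∈ M, ⁅z, y⁆ ∈ M := by
    intro z y hy
    rw [hMmem]
    intro a ha
    have h1 := hinv z a y
    have h2 : B ⁅z, a⁆ y = 0 := (hMmem y).mp hy _ (hKideal z a ha)
    linarith
  -- brackets between K and M vanish
  have hbr0 : ∀ a ∈ K, ∀ y ∈ M, ⁅a, y⁆ = (0 : g) := by
    intro a ha y hy
    refine hinf _ ?_ (hMideal a y hy)
    rw [hKmem, LieHom.map_lie, (hKmem a).mp ha, zero_lie]
  -- t abelian, elementwise
  have htz : ∀ a ∈ t, ∀ b ∈ t, ⁅a, b⁆ = (0 : g) := by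
    intro a ha b hb
    have := htab.trivial ⟨a, ha⟩ ⟨b, hb⟩
    exact congrArg Subtype.val this
  constructor
  · -- image is abelian
    constructor
    intro x y
    apply Subtype.ext
    show ⁅(x : g'), (y : g')⁆ = 0
    obtain ⟨a, ha, hax⟩ := (LieSubalgebra.mem_map (f := f) (K := t) _).mp x.2
    obtain ⟨b, hb, hby⟩ := (LieSubalgebra.mem_map (f := f) (K := t) _).mp y.2
    rw [← hax, ← hby, ← LieHom.map_lie, htz a ha b hb, map_zero]
  · -- maximality
    intro t' ht'ab hle
    have ht'z : ∀ a ∈ t', ∀ b ∈ t', ⁅a, b⁆ = (0 : g') := by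
      intro a ha b hb
      have := ht'ab.trivial ⟨a, ha⟩ ⟨b, hb⟩
      exact congrArg Subtype.val this
    -- the pullback of t' inside M
    set s : Submodule ℝ g := M ⊓ Submodule.comap (f : g →ₗ[ℝ] g') t'.toSubmodule with hs
    have hsmem : ∀ y : g, y ∈ s ↔ y ∈ M ∧ f y ∈ t' := fun y => Iff.rfl
    have hs0 : ∀ y₁ ∈ s, ∀ y₂ ∈ s, ⁅y₁, y₂⁆ = (0 : g) := by
      intro y₁ h₁ y₂ h₂
      obtain ⟨h₁M, h₁t⟩ := (hsmem _).mp h₁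
      obtain ⟨h₂M, h₂t⟩ := (hsmem _).mp h₂
      refine hinf _ ?_ (hMideal _ _ h₂M)
      rw [hKmem, LieHom.map_lie]
      exact ht'z _ h₁t _ h₂t
    -- brackets between t and s vanish
    have hts0 : ∀ u ∈ t, ∀ y ∈ s, ⁅u, y⁆ = (0 : g) := by
      intro u hu y hy
      obtain ⟨a, ha, b, hb, rfl⟩ := hsup u
      have hfb : f b ∈ t' := by
        have : f (a + b) ∈ t.map f := (LieSubalgebra.mem_map (f := f) (K := t) _).mpr ⟨a + b, hu, rfl⟩
        have h2 : f (a + b) = f b := by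
          rw [map_add, (hKmem a).mp ha, zero_add]
        rw [h2] at this
        exact hle this
      have hbs : b ∈ s := (hsmem b).mpr ⟨hb, hfb⟩
      rw [add_lie, hbr0 a ha y ((hsmem y).mp hy).1, hs0 b hbs y hy, add_zero]
    -- the subalgebra generated: t ⊔ s is abelian
    have hTz : ∀ x ∈ t.toSubmodule ⊔ s, ∀ y ∈ t.toSubmodule ⊔ s, ⁅x, y⁆ = (0 : g) := by
      intro x hx y hy
      obtain ⟨u₁, hu₁, v₁, hv₁, rfl⟩ := Submodule.mem_sup.mp hx
      obtain ⟨u₂, hu₂, v₂, hv₂, rfl⟩ := Submodule.mem_sup.mp hy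
      rw [add_lie, lie_add, lie_add]
      rw [htz u₁ hu₁ u₂ hu₂, hts0 u₁ hu₁ v₂ hv₂, hs0 v₁ hv₁ v₂ hv₂,
        show ⁅v₁, u₂⁆ = -⁅u₂, v₁⁆ from (lie_skew _ _).symm, hts0 u₂ hu₂ v₁ hv₁]
      simp
    set T : LieSubalgebra ℝ g :=
      { toSubmodule := t.toSubmodule ⊔ s
        lie_mem' := fun {x y} hx hy => by
          rw [hTz x hx y hy]; exact (t.toSubmodule ⊔ s).zero_mem } with hT
    have hTab : IsLieAbelian T := by
      constructor
      intro x y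
      apply Subtype.ext
      exact hTz _ x.2 _ y.2
    have htT : t ≤ T := fun x hx => Submodule.mem_sup_left hx
    have hTt : T = t := htmax T hTab htT
    have hst : ∀ y ∈ s, y ∈ t := by
      intro y hy
      have : y ∈ T := Submodule.mem_sup_right hy
      rwa [hTt] at this
    -- conclude t' ≤ t.map f
    apply le_antisymm _ hle
    intro y' hy'
    obtain ⟨x, rfl⟩ := hf y'
    obtain ⟨a, ha, b, hb, rfl⟩ := hsup x
    have hfab : f (a + b) = f b := by
      rw [map_add, (hKmem a).mp ha, zero_add]
    have hbs : b ∈ s := (hsmem b).mpr ⟨hb, hfab ▸ hy'⟩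
    exact (LieSubalgebra.mem_map (f := f) (K := t) _).mpr ⟨b, hst b hbs, hfab.symm⟩
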